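/- Let α < β be real numbers, γ > 0, and σ > 0. Let Q and E be independent real random variables where Q has CDF F_Q(y) = 0 for y < α, F_Q(y) = ((y − α)/(β − α))^{γ/2} for α ≤ y ≤ β, and F_Q(y) = 1 for y > β, and E is normally distributed with mean 0 and standard deviation σ. Then Y = Q + E has a density f_Y with respect to Lebesgue measure given, for every real y, by f_Y(y) = (γ/(2(β − α))) · ∫_0^1 v^{(γ−2)/2} · (1/s)·φ((v − m)/s) dv, where m = (y − α)/(β − α), s = σ/(β − α), and φ is the standard normal density. -/

import Mathlib

open MeasureTheory ProbabilityTheory Set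
open scoped ENNReal NNReal

/-- The standard normal density `φ(u) = (2π)^{-1/2} e^{-u²/2}`. -/
noncomputable def stdNormalPDF (u : ℝ) : ℝ :=
  (Real.sqrt (2 * Real.pi))⁻¹ * Real.exp (-(u ^ 2) / 2)

/-- The standard normal CDF `Φ(t) = ∫_{-∞}^t φ(u) du`. -/
noncomputable def stdNormalCDF (t : ℝ) : ℝ :=
  ∫ u in Set.Iic t, stdNormalPDF u


noncomputable def cqPDF (α β γ : ℝ) : ℝ → ℝ :=
  (Set.Ioc α β).indicator fun q => (γ / (2 * (β - α))) * ((q - α) / (β - α)) ^ ((γ - 2) / 2)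


lemma stdNormalPDF_neg (u : ℝ) : stdNormalPDF (-u) = stdNormalPDF u := by
  simp [stdNormalPDF, neg_sq]

lemma gaussianPDFReal_eq (σ : ℝ) (hσ : 0 < σ) (x : ℝ) :
    gaussianPDFReal 0 ⟨σ ^ 2, sq_nonneg σ⟩ x = σ⁻¹ * stdNormalPDF (x / σ) := by
  unfold gaussianPDFReal stdNormalPDF
  change (Real.sqrt (2 * Real.pi * σ ^ 2))⁻¹ * Real.exp (-(x - 0) ^ 2 / (2 * σ ^ 2)) = _
  have h1 : Real.sqrt (2 * Real.pi * σ ^ 2) = Real.sqrt (2 * Real.pi) * σ := by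
    rw [Real.sqrt_mul (by positivity), Real.sqrt_sq hσ.le]
  rw [h1]
  have h2 : -(x - 0) ^ 2 / (2 * σ ^ 2) = -((x / σ) ^ 2) / 2 := by
    field_simp
    ring
  rw [h2, mul_inv]
  ring


lemma rhs_inner (α β γ σ : ℝ) (hab : α < β) (hγ : 0 < γ) (hσ : 0 < σ) (t : ℝ) :
    (γ / (2 * (β - α))) *
        ∫ v in (0:ℝ)..1, v ^ ((γ - 2) / 2) *
          ((1 / (σ / (β - α))) * stdNormalPDF ((v - (t - α) / (β - α)) / (σ / (β - α))))
      = ∫ q, cqPDF α β γ q * gaussianPDFReal 0 ⟨σ ^ 2, sq_nonneg σ⟩ (t - q) := by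
  have hδ : (β - α) ≠ 0 := by linarith
  set H : ℝ → ℝ := fun q => ((γ / (2 * (β - α))) * ((q - α) / (β - α)) ^ ((γ - 2) / 2)) *
    gaussianPDFReal 0 ⟨σ ^ 2, sq_nonneg σ⟩ (t - q) with hH
  have hpt : ∀ v : ℝ, (γ / (2 * (β - α))) * (v ^ ((γ - 2) / 2) *
      ((1 / (σ / (β - α))) * stdNormalPDF ((v - (t - α) / (β - α)) / (σ / (β - α)))))
      = (β - α) * H ((β - α) * v + α) := by
    intro v
    have harg : (v - (t - α) / (β - α)) / (σ / (β - α)) = -((t - ((β - α) * v + α)) / σ) := by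
      field_simp
      ring
    rw [harg, stdNormalPDF_neg, hH]
    simp only
    rw [gaussianPDFReal_eq σ hσ]
    have hbase : ((β - α) * v + α - α) / (β - α) = v := by field_simp; ring
    rw [hbase]
    field_simp
  have step1 : (γ / (2 * (β - α))) *
        ∫ v in (0:ℝ)..1, v ^ ((γ - 2) / 2) *
          ((1 / (σ / (β - α))) * stdNormalPDF ((v - (t - α) / (β - α)) / (σ / (β - α))))
      = ∫ v in (0:ℝ)..1, (β - α) * H ((β - α) * v + α) := by
    rw [← intervalIntegral.integral_const_mul]
    exact intervalIntegral.integral_congr (fun v _ => hpt v)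
  rw [step1, intervalIntegral.integral_const_mul]
  rw [intervalIntegral.integral_comp_mul_add H hδ α]
  have e0 : (β - α) * 0 + α = α := by ring
  have e1 : (β - α) * 1 + α = β := by ring
  rw [e0, e1, smul_eq_mul, ← mul_assoc, mul_inv_cancel₀ hδ, one_mul]
  rw [intervalIntegral.integral_of_le hab.le, ← integral_indicator measurableSet_Ioc]
  congr 1
  funext q
  by_cases hq : q ∈ Set.Ioc α β
  · rw [Set.indicator_of_mem hq]
    unfold cqPDF
    rw [Set.indicator_of_mem hq]
  · rw [Set.indicator_of_notMem hq]
    unfold cqPDF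
    rw [Set.indicator_of_notMem hq, zero_mul]


lemma cqPDF_nonneg (α β γ : ℝ) (hab : α < β) (hγ : 0 < γ) (q : ℝ) : 0 ≤ cqPDF α β γ q := by
  unfold cqPDF
  apply Set.indicator_nonneg
  intro q hq
  have h1 : (0:ℝ) ≤ (q - α) / (β - α) := by
    apply div_nonneg <;> linarith [hq.1]
  exact mul_nonneg (div_nonneg hγ.le (by linarith)) (Real.rpow_nonneg h1 _)

lemma cqPDF_measurable (α β γ : ℝ) : Measurable (cqPDF α β γ) := by
  unfold cqPDF
  exact (((measurable_id.sub_const α).div_const _).pow_const _).const_mul _ |>.indicator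
    measurableSet_Ioc

lemma cqPDF_intervalIntegrable (α β γ : ℝ) (hab : α < β) (hγ : 0 < γ) :
    IntervalIntegrable (fun q => (γ / (2 * (β - α))) * ((q - α) / (β - α)) ^ ((γ - 2) / 2))
      volume α β := by
  have hr : (-1:ℝ) < (γ - 2) / 2 := by linarith
  have h1 : IntervalIntegrable (fun x : ℝ => x ^ ((γ - 2) / 2)) volume 0 1 :=
    intervalIntegral.intervalIntegrable_rpow' hr
  have h2 := (h1.comp_mul_right (c := (β - α)⁻¹))
  have h3 := h2.comp_sub_right α
  have hne : (β - α) ≠ 0 := by linarith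
  have e0 : (0:ℝ) / (β - α)⁻¹ + α = α := by simp
  have e1 : (1:ℝ) / (β - α)⁻¹ + α = β := by field_simp; ring
  rw [e0, e1] at h3
  have : (fun q : ℝ => ((q - α) * (β - α)⁻¹) ^ ((γ - 2) / 2))
      = fun q : ℝ => ((q - α) / (β - α)) ^ ((γ - 2) / 2) := by
    funext q; simp [div_eq_mul_inv]
  rw [this] at h3
  exact h3.const_mul _

lemma cqPDF_key (α β γ : ℝ) (hab : α < β) (hγ : 0 < γ) (w : ℝ) :
    ∫ q in α..w, (γ / (2 * (β - α))) * ((q - α) / (β - α)) ^ ((γ - 2) / 2)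
      = ((w - α) / (β - α)) ^ (γ / 2) := by
  have hδ : (β - α) ≠ 0 := by linarith
  set m := (w - α) / (β - α) with hm
  have hsub := intervalIntegral.integral_comp_mul_add (a := 0) (b := m)
    (fun q : ℝ => (γ / (2 * (β - α))) * ((q - α) / (β - α)) ^ ((γ - 2) / 2)) hδ α
  have e1 : (β - α) * m + α = w := by rw [hm, mul_div_assoc', mul_div_cancel_left₀ _ hδ]; ring
  have e2 : (β - α) * 0 + α = α := by ring
  rw [e1, e2] at hsub
  have e3 : ∀ v : ℝ, (γ / (2 * (β - α))) * (((β - α) * v + α - α) / (β - α)) ^ ((γ - 2) / 2)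
      = (γ / (2 * (β - α))) * v ^ ((γ - 2) / 2) := by
    intro v; congr 2; field_simp; ring
  simp only [e3] at hsub
  have hγ2 : γ / 2 ≠ 0 := by positivity
  have e4 : ∫ v in (0:ℝ)..m, (γ / (2 * (β - α))) * v ^ ((γ - 2) / 2)
      = (γ / (2 * (β - α))) * (m ^ (γ / 2) / (γ / 2)) := by
    rw [intervalIntegral.integral_const_mul, integral_rpow (Or.inl (by linarith))]
    have he : (γ - 2) / 2 + 1 = γ / 2 := by ring
    rw [he, Real.zero_rpow hγ2, sub_zero]
  rw [e4, smul_eq_mul] at hsub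
  have h5 : ∫ q in α..w, (γ / (2 * (β - α))) * ((q - α) / (β - α)) ^ ((γ - 2) / 2)
      = (β - α) * ((γ / (2 * (β - α))) * (m ^ (γ / 2) / (γ / 2))) := by
    rw [hsub, ← mul_assoc, mul_inv_cancel₀ hδ, one_mul]
  rw [h5]
  field_simp

lemma cqPDF_integral_Iic (α β γ : ℝ) (hab : α < β) (hγ : 0 < γ) (x : ℝ) :
    ∫ q in Set.Iic x, cqPDF α β γ q =
      if x < α then 0 else if x ≤ β then ((x - α) / (β - α)) ^ (γ / 2) else 1 := by
  have hδ : (β - α) ≠ 0 := by linarith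
  have h1 : ∫ q in Set.Iic x, cqPDF α β γ q
      = ∫ q in Set.Ioc α (min β x), (γ / (2 * (β - α))) * ((q - α) / (β - α)) ^ ((γ - 2) / 2) := by
    unfold cqPDF
    rw [integral_indicator measurableSet_Ioc,
      Measure.restrict_restrict measurableSet_Ioc, Set.Ioc_inter_Iic]
  rw [h1]
  rcases lt_or_ge x α with hx | hx
  · rw [if_pos hx]
    rw [Set.Ioc_eq_empty (by simp [min_le_of_right_le hx.le]; intro h; linarith)]
    simp
  · rw [if_neg (not_lt.mpr hx)]
    rcases le_or_gt x β with hxb | hxb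
    · rw [if_pos hxb, min_eq_right hxb]
      rw [← intervalIntegral.integral_of_le hx]
      exact cqPDF_key α β γ hab hγ x
    · rw [if_neg (not_le.mpr hxb), min_eq_left hxb.le]
      rw [← intervalIntegral.integral_of_le hab.le]
      rw [cqPDF_key α β γ hab hγ β]
      rw [div_self hδ, Real.one_rpow]

lemma cqPDF_integrable (α β γ : ℝ) (hab : α < β) (hγ : 0 < γ) :
    Integrable (cqPDF α β γ) volume := by
  unfold cqPDF
  exact (((intervalIntegrable_iff_integrableOn_Ioc_of_le hab.le).mp
    (cqPDF_intervalIntegrable α β γ hab hγ))).integrable_indicator measurableSet_Ioc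

lemma cqPDF_map (α β γ : ℝ) (hab : α < β) (hγ : 0 < γ)
    {Ω : Type*} [MeasurableSpace Ω] (P : Measure Ω) [IsProbabilityMeasure P]
    (Q : Ω → ℝ) (hQm : Measurable Q)
    (hQ : ∀ y : ℝ, (P {ω | Q ω ≤ y}).toReal =
      if y < α then 0 else if y ≤ β then ((y - α) / (β - α)) ^ (γ / 2) else 1) :
    P.map Q = volume.withDensity (fun q => ENNReal.ofReal (cqPDF α β γ q)) := by
  have hint := cqPDF_integrable α β γ hab hγ
  have hnn := cqPDF_nonneg α β γ hab hγ
  have hwd : ∀ x : ℝ, (volume.withDensity (fun q => ENNReal.ofReal (cqPDF α β γ q))) (Set.Iic x)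
      = ENNReal.ofReal (if x < α then 0 else if x ≤ β then ((x - α) / (β - α)) ^ (γ / 2) else 1) := by
    intro x
    rw [withDensity_apply _ measurableSet_Iic,
      ← ofReal_integral_eq_lintegral_ofReal hint.restrict (ae_of_all _ hnn),
      cqPDF_integral_Iic α β γ hab hγ x]
  have htot : ∫ q, cqPDF α β γ q = 1 := by
    rw [← setIntegral_eq_integral_of_forall_compl_eq_zero
      (s := Set.Iic β) (fun q hq => ?_), cqPDF_integral_Iic α β γ hab hγ β]
    · rw [if_neg (not_lt.mpr hab.le), if_pos le_rfl, div_self (by linarith : β - α ≠ 0), Real.one_rpow]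
    · simp only [Set.mem_Iic, not_le] at hq
      unfold cqPDF
      exact Set.indicator_of_notMem (fun h => absurd h.2 (not_le.mpr hq)) _
  haveI hfin : IsFiniteMeasure
      (volume.withDensity (fun q => ENNReal.ofReal (cqPDF α β γ q))) := by
    constructor
    rw [withDensity_apply _ MeasurableSet.univ, Measure.restrict_univ,
      ← ofReal_integral_eq_lintegral_ofReal hint (ae_of_all _ hnn), htot]
    simp
  haveI : IsProbabilityMeasure (P.map Q) := Measure.isProbabilityMeasure_map hQm.aemeasurable
  refine Measure.ext_of_Iic (P.map Q) _ (fun x => ?_)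
  rw [Measure.map_apply hQm measurableSet_Iic, hwd x]
  have : Q ⁻¹' Set.Iic x = {ω | Q ω ≤ x} := rfl
  rw [this, ← hQ x, ENNReal.ofReal_toReal (measure_ne_top P _)]

lemma cqPDF_lintegral_one (α β γ : ℝ) (hab : α < β) (hγ : 0 < γ) :
    ∫⁻ q, ENNReal.ofReal (cqPDF α β γ q) = 1 := by
  rw [← ofReal_integral_eq_lintegral_ofReal (cqPDF_integrable α β γ hab hγ)
    (ae_of_all _ (cqPDF_nonneg α β γ hab hγ))]
  have htot : ∫ q, cqPDF α β γ q = 1 := by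
    rw [← setIntegral_eq_integral_of_forall_compl_eq_zero
      (s := Set.Iic β) (fun q hq => ?_), cqPDF_integral_Iic α β γ hab hγ β]
    · rw [if_neg (not_lt.mpr hab.le), if_pos le_rfl, div_self (by linarith : β - α ≠ 0),
        Real.one_rpow]
    · simp only [Set.mem_Iic, not_le] at hq
      unfold cqPDF
      exact Set.indicator_of_notMem (fun h => absurd h.2 (not_le.mpr hq)) _
  rw [htot]
  simp

/-- If `Q` has the convex quadratic distribution with parameters
`α < β`, `γ > 0`, and `E` is an independent normal with mean `0` and standard deviation
`σ > 0`, then `Y = Q + E` has Lebesgue density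
`f_Y(y) = (γ/(2(β−α)))·∫_0^1 v^{(γ−2)/2}·(1/s)·φ((v−m)/s) dv`
with `m = (y−α)/(β−α)` and `s = σ/(β−α)`; that is, `P(Y ≤ y) = ∫_{-∞}^y f_Y(t) dt`. -/
theorem stmt4 (α β γ σ : ℝ) (hab : α < β) (hγ : 0 < γ) (hσ : 0 < σ)
    {Ω : Type*} [MeasurableSpace Ω] (P : MeasureTheory.Measure Ω) [IsProbabilityMeasure P]
    (Q E : Ω → ℝ) (hQm : Measurable Q) (hEm : Measurable E)
    (hindep : IndepFun Q E P)
    (hQ : ∀ y : ℝ, (P {ω | Q ω ≤ y}).toReal =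
      if y < α then 0 else if y ≤ β then ((y - α) / (β - α)) ^ (γ / 2) else 1)
    (hE : P.map E = gaussianReal 0 ⟨σ ^ 2, sq_nonneg σ⟩) :
    ∀ y : ℝ,
      (P {ω | Q ω + E ω ≤ y}).toReal =
        ∫ t in Set.Iic y,
          (γ / (2 * (β - α))) *
            ∫ v in (0 : ℝ)..1,
              v ^ ((γ - 2) / 2) *
                ((1 / (σ / (β - α))) *
                  stdNormalPDF ((v - (t - α) / (β - α)) / (σ / (β - α)))) := by
  intro y
  have hδ : (β - α) ≠ 0 := by linarith
  set V : ℝ≥0 := (⟨σ ^ 2, sq_nonneg σ⟩ : NNReal) with hVdef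
  have hVne : V ≠ 0 := by
    intro h
    have h2 : (V : ℝ) = 0 := by rw [h]; simp
    rw [hVdef] at h2
    change σ ^ 2 = 0 at h2
    nlinarith
  have hfQm : Measurable (cqPDF α β γ) := cqPDF_measurable α β γ
  have hnn := cqPDF_nonneg α β γ hab hγ
  have hGm : Measurable (gaussianPDFReal 0 V) := measurable_gaussianPDFReal 0 V
  have hpdfm : Measurable (gaussianPDF 0 V) := hGm.ennreal_ofReal
  have hmapQ : P.map Q = volume.withDensity (fun q => ENNReal.ofReal (cqPDF α β γ q)) :=
    cqPDF_map α β γ hab hγ P Q hQm hQ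
  have hNmeas : Measurable fun x : ℝ => (gaussianReal 0 V) (Set.Iic x) :=
    Monotone.measurable (fun a b hab' => measure_mono (Set.Iic_subset_Iic.mpr hab'))
  have hkern : Measurable fun q : ℝ => (gaussianReal 0 V) (Set.Iic (y - q)) :=
    hNmeas.comp (measurable_const.sub measurable_id)
  have hS : MeasurableSet {p : ℝ × ℝ | p.1 + p.2 ≤ y} :=
    measurableSet_le (measurable_fst.add measurable_snd) measurable_const
  have hLHS : P {ω | Q ω + E ω ≤ y}
      = ∫⁻ q, ENNReal.ofReal (cqPDF α β γ q) * (gaussianReal 0 V) (Set.Iic (y - q)) := by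
    have h1 : {ω | Q ω + E ω ≤ y} = (fun ω => (Q ω, E ω)) ⁻¹' {p : ℝ × ℝ | p.1 + p.2 ≤ y} := rfl
    rw [h1, ← Measure.map_apply (hQm.prodMk hEm) hS,
      (indepFun_iff_map_prod_eq_prod_map_map hQm.aemeasurable hEm.aemeasurable).mp hindep,
      Measure.prod_apply hS]
    have h2 : ∀ q : ℝ, Prod.mk q ⁻¹' {p : ℝ × ℝ | p.1 + p.2 ≤ y} = Set.Iic (y - q) := by
      intro q; ext e
      simp only [Set.mem_preimage, Set.mem_setOf_eq, Set.mem_Iic]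
      constructor <;> intro h <;> linarith
    simp_rw [h2, hE]
    rw [hmapQ, lintegral_withDensity_eq_lintegral_mul _ hfQm.ennreal_ofReal hkern]
    rfl
  set k : ℝ → ℝ≥0∞ := fun t => ∫⁻ q, ENNReal.ofReal (cqPDF α β γ q) * gaussianPDF 0 V (t - q)
    with hk
  have hstep : ∀ t : ℝ, (γ / (2 * (β - α))) * ∫ v in (0:ℝ)..1, v ^ ((γ - 2) / 2) *
      ((1 / (σ / (β - α))) * stdNormalPDF ((v - (t - α) / (β - α)) / (σ / (β - α))))
      = (k t).toReal := by
    intro t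
    rw [rhs_inner α β γ σ hab hγ hσ t]
    show ∫ q, cqPDF α β γ q * gaussianPDFReal 0 V (t - q) = (k t).toReal
    have hmeas2 : Measurable fun q : ℝ => cqPDF α β γ q * gaussianPDFReal 0 V (t - q) :=
      hfQm.mul (hGm.comp (measurable_const.sub measurable_id))
    rw [integral_eq_lintegral_of_nonneg_ae
      (ae_of_all _ fun q => mul_nonneg (hnn q) (gaussianPDFReal_nonneg _ _ _))
      hmeas2.aestronglyMeasurable]
    congr 1
    apply lintegral_congr
    intro q
    rw [ENNReal.ofReal_mul (hnn q)]
    rfl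
  have huncurry : Measurable
      (fun p : ℝ × ℝ => ENNReal.ofReal (cqPDF α β γ p.2) * gaussianPDF 0 V (p.1 - p.2)) :=
    (hfQm.ennreal_ofReal.comp measurable_snd).mul (hpdfm.comp (measurable_fst.sub measurable_snd))
  have hkmeas : Measurable k := huncurry.lintegral_prod_right'
  have hbound : ∀ t, k t ≤ ENNReal.ofReal ((Real.sqrt (2 * Real.pi * V))⁻¹) := by
    intro t
    have hmono : ∀ q, ENNReal.ofReal (cqPDF α β γ q) * gaussianPDF 0 V (t - q)
        ≤ ENNReal.ofReal (cqPDF α β γ q) * ENNReal.ofReal ((Real.sqrt (2 * Real.pi * V))⁻¹) := by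
      intro q
      apply mul_le_mul_right
      apply ENNReal.ofReal_le_ofReal
      show gaussianPDFReal 0 V (t - q) ≤ _
      unfold gaussianPDFReal
      have hexp : Real.exp (-(t - q - 0) ^ 2 / (2 * (V:ℝ))) ≤ 1 := by
        rw [Real.exp_le_one_iff]
        apply div_nonpos_of_nonpos_of_nonneg (neg_nonpos.mpr (sq_nonneg _))
        positivity
      have hs : (0:ℝ) ≤ (Real.sqrt (2 * Real.pi * V))⁻¹ := by positivity
      calc (Real.sqrt (2 * Real.pi * V))⁻¹ * Real.exp (-(t - q - 0) ^ 2 / (2 * (V:ℝ)))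
          ≤ (Real.sqrt (2 * Real.pi * V))⁻¹ * 1 := by
            exact mul_le_mul_of_nonneg_left hexp hs
        _ = (Real.sqrt (2 * Real.pi * V))⁻¹ := mul_one _
    calc k t ≤ ∫⁻ q, ENNReal.ofReal (cqPDF α β γ q)
          * ENNReal.ofReal ((Real.sqrt (2 * Real.pi * V))⁻¹) := lintegral_mono hmono
      _ = (∫⁻ q, ENNReal.ofReal (cqPDF α β γ q))
          * ENNReal.ofReal ((Real.sqrt (2 * Real.pi * V))⁻¹) :=
            lintegral_mul_const _ hfQm.ennreal_ofReal
      _ = ENNReal.ofReal ((Real.sqrt (2 * Real.pi * V))⁻¹) := by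
            rw [cqPDF_lintegral_one α β γ hab hγ, one_mul]
  have hklt : ∀ t, k t < ⊤ := fun t => lt_of_le_of_lt (hbound t) ENNReal.ofReal_lt_top
  have hshift : ∀ q : ℝ, (∫⁻ t in Set.Iic y, gaussianPDF 0 V (t - q))
      = (gaussianReal 0 V) (Set.Iic (y - q)) := by
    intro q
    rw [gaussianReal_apply 0 hVne]
    rw [← lintegral_indicator measurableSet_Iic, ← lintegral_indicator measurableSet_Iic]
    rw [← lintegral_sub_right_eq_self
      (fun u => (Set.Iic (y - q)).indicator (gaussianPDF 0 V) u) q]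
    apply lintegral_congr
    intro t
    by_cases ht : t ∈ Set.Iic y
    · rw [Set.indicator_of_mem ht,
        Set.indicator_of_mem (by simp only [Set.mem_Iic] at ht ⊢; linarith)]
    · rw [Set.indicator_of_notMem ht, Set.indicator_of_notMem (by
        simp only [Set.mem_Iic, not_le] at ht ⊢; linarith)]
  have hswap : (∫⁻ t in Set.Iic y, k t)
      = ∫⁻ q, ENNReal.ofReal (cqPDF α β γ q) * (gaussianReal 0 V) (Set.Iic (y - q)) := by
    rw [hk]
    rw [lintegral_lintegral_swap huncurry.aemeasurable]
    apply lintegral_congr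
    intro q
    have hm : Measurable fun x : ℝ => gaussianPDF 0 V (x - q) :=
      hpdfm.comp (measurable_id.sub_const q)
    rw [lintegral_const_mul _ hm, hshift q]
  rw [hLHS, show (∫ t in Set.Iic y,
      (γ / (2 * (β - α))) * ∫ v in (0:ℝ)..1, v ^ ((γ - 2) / 2) *
        ((1 / (σ / (β - α))) * stdNormalPDF ((v - (t - α) / (β - α)) / (σ / (β - α)))))
      = ∫ t in Set.Iic y, (k t).toReal from
    setIntegral_congr_fun measurableSet_Iic (fun t _ => hstep t)]
  rw [integral_toReal (hkmeas.aemeasurable.restrict) (ae_of_all _ fun t => hklt t), hswap]
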